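/- For every m ≥ 1 and every permutation σ of [2m], one has des(σ) = m and xdes(σ) = m if and only if for every i ∈ [2m], σ(i) > i exactly when i is odd. -/

import Mathlib

open scoped Classical

namespace KArr

/-- Positive reduction of a word over ℤ: each positive letter is replaced by its
rank among the distinct positive letters of the word; negative letters unchanged. -/
def posReduce (w : List ℤ) : List ℤ :=
  w.map fun x => if 0 < x then ((w.toFinset.filter fun y => 0 < y ∧ y ≤ x).card : ℤ) else x

/-- The set of descents of a word (1-indexed: `i` is a descent iff `w_i > w_{i+1}`). -/
def desSet (w : List ℤ) : Finset ℕ :=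
  (Finset.range w.length).filter fun i => 1 ≤ i ∧ w.getD i 0 < w.getD (i - 1) 0

/-- The number of descents of a word. -/
def desNum (w : List ℤ) : ℕ := (desSet w).card

/-- The subword of positive letters. -/
def posPart (w : List ℤ) : List ℤ := w.filter fun x => decide (0 < x)

/-- A `k`-arrangement of `[n]`: a permutation together with a color in `Fin k`
attached to each fixed point (encoded as a total coloring that is `0` off the
fixed points). -/
abbrev Arrangement (n k : ℕ) :=
  {x : Equiv.Perm (Fin n) × (Fin n → Fin k) // ∀ j, x.1 j ≠ j → (x.2 j : ℕ) = 0}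

/-- The derangement form of a `k`-arrangement: replace each fixed point by the
negative letter recording its color, then positively reduce.  (Color `c : Fin k`
encodes the letter `¬(c+1) = -(c+1)`.) -/
def dfWord {n k : ℕ} (a : Arrangement n k) : List ℤ :=
  posReduce <| (List.finRange n).map fun i =>
    if a.1.1 i = i then -(((a.1.2 i : ℕ) : ℤ) + 1) else ((a.1.1 i : ℕ) : ℤ) + 1

/-- The permutation form of a `k`-arrangement: replace each fixed point whose
color is not `¬k` by the corresponding negative letter, then positively reduce. -/
def pfWord {n k : ℕ} (a : Arrangement n k) : List ℤ :=
  posReduce <| (List.finRange n).map fun i =>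
    if a.1.1 i = i ∧ (a.1.2 i : ℕ) + 1 ≠ k then -(((a.1.2 i : ℕ) : ℤ) + 1)
    else ((a.1.1 i : ℕ) : ℤ) + 1

/-- `fix_i(a)`: the number of fixed points of the base permutation with color `c`. -/
noncomputable def fixCount {n k : ℕ} (a : Arrangement n k) (c : Fin k) : ℕ :=
  Nat.card {i : Fin n // a.1.1 i = i ∧ a.1.2 i = c}

/-- `DEZ(a)`, the descent set of the derangement form. -/
def DEZset {n k : ℕ} (a : Arrangement n k) : Finset ℕ := desSet (dfWord a)

/-- `DES(a)`, the descent set of the permutation form. -/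
def DESset {n k : ℕ} (a : Arrangement n k) : Finset ℕ := desSet (pfWord a)

/-- `dez(a)`, the number of descents of the derangement form. -/
def dez {n k : ℕ} (a : Arrangement n k) : ℕ := desNum (dfWord a)

/-- `des(a)`, the number of descents of the permutation form. -/
def des {n k : ℕ} (a : Arrangement n k) : ℕ := desNum (pfWord a)

/-- `Der(a)`, the derangement part: the positive subword of the derangement form. -/
def Der {n k : ℕ} (a : Arrangement n k) : List ℤ := posPart (dfWord a)

/-- One-line notation of a permutation of `[n]`, as a word over `ℤ` with letters `1,…,n`. -/
def oneLine {n : ℕ} (π : Equiv.Perm (Fin n)) : List ℤ :=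
  (List.finRange n).map fun i => ((π i : ℕ) : ℤ) + 1

/-- A word `w` contains the pattern `p` if some subsequence of `w` of the same
length as `p` is order-isomorphic to `p` (entrywise strict inequalities match). -/
def Contains (w p : List ℤ) : Prop :=
  ∃ s : List ℤ, s.Sublist w ∧ s.length = p.length ∧
    ∀ i j, i < p.length → j < p.length →
      (s.getD i 0 < s.getD j 0 ↔ p.getD i 0 < p.getD j 0)

/-- A word avoids a pattern if it does not contain it. -/
def Avoids (w p : List ℤ) : Prop := ¬ Contains w p


/-- `dez`-word of a permutation: replace each fixed point by `¬1 = -1`,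
then positively reduce (the `1`-arrangement derangement form). -/
def dzWordPerm {n : ℕ} (π : Equiv.Perm (Fin n)) : List ℤ :=
  posReduce <| (List.finRange n).map fun i =>
    if π i = i then (-1 : ℤ) else ((π i : ℕ) : ℤ) + 1

/-- The weak derangement part `Der_k(a)`: the derangement form with all letters `¬k` removed. -/
def wDer {n k : ℕ} (a : Arrangement n k) : List ℤ :=
  (dfWord a).filter fun x => decide (x ≠ -(k : ℤ))

/-- For a word `w` which is a derangement form, position `j` (0-indexed) of `w` is an
excedance of the base permutation iff the letter is positive and exceeds the number
of positive letters among the first `j+1` letters. -/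
def isExcAt (w : List ℤ) (j : ℕ) : Prop :=
  ((((w.take (j + 1)).filter fun x => decide (0 < x)).length : ℤ)) < w.getD j 0

/-- `e_i = E` for the (1-indexed) letter positions `0 ≤ i ≤ m+1` of `w`, with the
boundary conventions `e_0 = e_{m+1} = E`. -/
def slotE (w : List ℤ) (i : ℕ) : Prop :=
  i = 0 ∨ i = w.length + 1 ∨ isExcAt w (i - 1)

/-- `w_i > w_{i+1}` (1-indexed letters) with the conventions `w_0 = w_{m+1} = +∞`;
this is the descent condition attached to slot `i`, `0 ≤ i ≤ m`. -/
def slotGt (w : List ℤ) (i : ℕ) : Prop :=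
  i = 0 ∨ (i < w.length ∧ w.getD i 0 < w.getD (i - 1) 0)

/-- Slot `i` is of type I: `w_i > w_{i+1}` and `(e_i, e_{i+1}) = (E, N)`. -/
def typeI (w : List ℤ) (i : ℕ) : Prop := slotGt w i ∧ slotE w i ∧ ¬ slotE w (i + 1)

/-- Slot `i` is of type II: `w_i ≤ w_{i+1}` and `(e_i, e_{i+1}) = (N, E)`. -/
def typeII (w : List ℤ) (i : ℕ) : Prop := ¬ slotGt w i ∧ ¬ slotE w i ∧ slotE w (i + 1)

/-- Slot `i` is of type III: `w_i ≤ w_{i+1}` and `(e_i, e_{i+1}) ≠ (N, E)`. -/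
def typeIII (w : List ℤ) (i : ℕ) : Prop := ¬ slotGt w i ∧ ¬ (¬ slotE w i ∧ slotE w (i + 1))

/-- Slot `i` is of type IV: `w_i > w_{i+1}` and `(e_i, e_{i+1}) ≠ (E, N)`. -/
def typeIV (w : List ℤ) (i : ℕ) : Prop := slotGt w i ∧ ¬ (slotE w i ∧ ¬ slotE w (i + 1))

/-- The length `s_i` of the `i`-th slot of the word `u` (a derangement form),
where the slot letters are the letters equal to `c` (`= ¬k`). -/
def slotLen (u : List ℤ) (c : ℤ) (i : ℕ) : ℕ :=
  let L := (List.range u.length).filter fun j => decide (u.getD j 0 ≠ c)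
  (if i < L.length then L.getD i 0 else u.length) - (if i = 0 then 0 else L.getD (i - 1) 0 + 1)

/-- The number of peaks of a word: indices `i` (1-indexed, `2 ≤ i ≤ n-1`)
with `w_{i-1} < w_i > w_{i+1}`. -/
def peakNum (w : List ℤ) : ℕ :=
  ((List.range w.length).filter fun i => decide (0 < i ∧ i + 1 < w.length ∧
    w.getD (i - 1) 0 < w.getD i 0 ∧ w.getD (i + 1) 0 < w.getD i 0)).length

/-- Number of fixed points of a permutation. -/
noncomputable def fixNum {n : ℕ} (π : Equiv.Perm (Fin n)) : ℕ :=
  Nat.card {i : Fin n // π i = i}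

/-- Number of excedances of a permutation. -/
noncomputable def excNum {n : ℕ} (π : Equiv.Perm (Fin n)) : ℕ :=
  Nat.card {i : Fin n // i < π i}

/-- Number of anti-excedances of a permutation. -/
noncomputable def aexcNum {n : ℕ} (π : Equiv.Perm (Fin n)) : ℕ :=
  Nat.card {i : Fin n // π i < i}

/-- `ldes` of a word: the smallest `i` which is a descent or equals the length
(0 for the empty word). -/
def ldesW (w : List ℤ) : ℕ :=
  (((List.range (w.length + 1)).filter fun i =>
    decide ((1 ≤ i ∧ i < w.length ∧ w.getD i 0 < w.getD (i - 1) 0) ∨ i = w.length))).headD 0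

/-- `rdes` of a word: the length minus the position of the rightmost descent
(`sSup ∅ = 0` when there is no descent). -/
def rdesW (w : List ℤ) : ℕ :=
  w.length - ((List.range w.length).filter fun i =>
    decide (1 ≤ i ∧ w.getD i 0 < w.getD (i - 1) 0)).foldr max 0

/-- Number of crossing descents of a permutation: (1-indexed) descents `i` with
`σ(i) ≥ i+1 ≥ σ(i+1)`. -/
def xdesW (w : List ℤ) : ℕ :=
  ((List.range w.length).filter fun i : ℕ =>
    decide (1 ≤ i ∧ (i : ℤ) + 1 ≤ w.getD (i - 1) 0 ∧ w.getD i 0 ≤ (i : ℤ) + 1)).length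

/-- Number of crossing descents of a permutation. -/
def xdesNum {n : ℕ} (σ : Equiv.Perm (Fin n)) : ℕ := xdesW (oneLine σ)

/-- A height sequence `d` encodes a Dyck path: it is weakly increasing and `d_i ≤ i - 1`
(1-indexed), i.e. `d.getD i 0 ≤ i` (0-indexed). -/
def IsDyck (d : List ℕ) : Prop :=
  List.Pairwise (· ≤ ·) d ∧ ∀ i < d.length, d.getD i 0 ≤ i

/-- Number of hills of a Dyck path: east steps of height equal to their index that
touch the diagonal and are immediately followed by a north step. -/
def hillNum (d : List ℕ) : ℕ :=
  ((List.range d.length).filter fun i => decide (d.getD i 0 = i ∧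
    (i + 1 = d.length ∨ d.getD i 0 < d.getD (i + 1) 0))).length

/-- Number of segments of a Dyck path: maximal runs of at least two consecutive
equal heights (counted by their starting index). -/
def segNum (d : List ℕ) : ℕ :=
  ((List.range d.length).filter fun i => decide (i + 1 < d.length ∧
    d.getD i 0 = d.getD (i + 1) 0 ∧ (i = 0 ∨ d.getD (i - 1) 0 ≠ d.getD i 0))).length

/-- `lseg`: the (1-indexed) position of the last step of the leftmost segment,
or `n+1` if there is no segment. -/
def lsegNum (d : List ℕ) : ℕ :=
  (((List.range (d.length + 2)).filter fun i =>
    decide ((2 ≤ i ∧ i ≤ d.length ∧ d.getD (i - 2) 0 = d.getD (i - 1) 0 ∧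
      (i = d.length ∨ d.getD (i - 1) 0 ≠ d.getD i 0)) ∨ i = d.length + 1))).headD 0

/-- Dyck paths of semilength `n`, encoded as monotone functions `Fin n → Fin (n+1)`
bounded by the diagonal (their height sequences). -/
def DyckFinset (n : ℕ) : Finset (Fin n → Fin (n + 1)) :=
  Finset.univ.filter fun f =>
    (∀ i j : Fin n, i ≤ j → f i ≤ f j) ∧ ∀ i : Fin n, (f i : ℕ) ≤ (i : ℕ)

/-- The height sequence of a function `Fin n → Fin (n+1)` as a list. -/
def hList {n : ℕ} (f : Fin n → Fin (n + 1)) : List ℕ :=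
  (List.finRange n).map fun i => (f i : ℕ)



def cnt17 (x : ℕ → Bool) (n : ℕ) : ℕ :=
  ((List.range n).filter fun i => decide (1 ≤ i) && x (i-1) && !(x i)).length

lemma cnt17_succ (x : ℕ → Bool) (n : ℕ) :
    cnt17 x (n+1) = cnt17 x n + (if 1 ≤ n ∧ x (n-1) = true ∧ x n = false then 1 else 0) := by
  simp only [cnt17, List.range_succ, List.filter_append, List.length_append]
  congr 1
  rw [List.filter_singleton]
  by_cases h : 1 ≤ n ∧ x (n-1) = true ∧ x n = false
  · simp [h.1, h.2.1, h.2.2]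
  · have : (decide (1 ≤ n) && x (n-1) && !(x n)) = false := by
      rcases Bool.eq_false_or_eq_true (x (n-1)) with h1 | h1 <;>
      rcases Bool.eq_false_or_eq_true (x n) with h2 | h2 <;>
      by_cases h3 : 1 ≤ n <;> simp_all
    simp [this, h]

lemma cnt17_two_step (x : ℕ → Bool) (n : ℕ) : cnt17 x (n+2) ≤ cnt17 x n + 1 := by
  rw [cnt17_succ, cnt17_succ]
  by_cases h : 1 ≤ n ∧ x (n-1) = true ∧ x n = false
  · have : ¬ (1 ≤ n+1 ∧ x (n+1-1) = true ∧ x (n+1) = false) := by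
      simp only [Nat.add_sub_cancel]
      intro h'
      rw [h.2.2] at h'
      exact absurd h'.2.1 (by simp)
    simp [h, this]
  · simp only [if_neg h]
    split <;> omega

lemma cnt17_bound : ∀ (n : ℕ) (x : ℕ → Bool), 2 * cnt17 x n ≤ n
  | 0, x => by simp [cnt17]
  | 1, x => by simp [cnt17, List.range_succ]
  | (n+2), x => by have h1 := cnt17_bound n x; have h2 := cnt17_two_step x n; omega

lemma cnt17_ab (x : ℕ → Bool) (m : ℕ) :
    (if 1 ≤ 2*m ∧ x (2*m-1) = true ∧ x (2*m) = false then 1 else 0) +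
    (if 1 ≤ 2*m+1 ∧ x (2*m+1-1) = true ∧ x (2*m+1) = false then 1 else 0) ≤ 1 := by
  split_ifs with hA hB
  · exfalso
    have h1 := hA.2.2
    have h2 := hB.2.1
    rw [Nat.add_sub_cancel] at h2
    rw [h1] at h2
    exact absurd h2 (by simp)
  all_goals omega

lemma cnt17_main : ∀ (m : ℕ) (x : ℕ → Bool), cnt17 x (2*m) = m →
    ∀ j < 2*m, x j = decide (j % 2 = 0)
  | 0, x, _ => by omega
  | (m+1), x, h => by
    intro j hj
    have e : 2 * (m+1) = 2*m + 1 + 1 := by ring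
    rw [e, cnt17_succ, cnt17_succ] at h
    have hb := cnt17_bound (2*m) x
    have hab := cnt17_ab x m
    have hm : cnt17 x (2*m) = m := by omega
    have ih := cnt17_main m x hm
    have ha : ¬ (1 ≤ 2*m ∧ x (2*m-1) = true ∧ x (2*m) = false) := by
      rintro ⟨h1, h2, h3⟩
      have hx : x (2*m-1) = decide ((2*m-1) % 2 = 0) := ih _ (by omega)
      rw [h2] at hx
      have : (2*m-1) % 2 = 0 := by simpa using hx.symm
      omega
    rw [if_neg ha] at h
    have hb' : 1 ≤ 2*m+1 ∧ x (2*m+1-1) = true ∧ x (2*m+1) = false := by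
      by_contra hc; rw [if_neg hc] at h; omega
    rw [Nat.add_sub_cancel] at hb'
    rcases Nat.lt_or_ge j (2*m) with hj' | hj'
    · exact ih j hj'
    · have : j = 2*m ∨ j = 2*m+1 := by omega
      rcases this with rfl | rfl
      · rw [hb'.2.1]
        exact (decide_eq_true (by omega)).symm
      · rw [hb'.2.2]
        exact (decide_eq_false (by omega)).symm

lemma cnt17_alt (m : ℕ) (x : ℕ → Bool) (h : ∀ j < 2*m, x j = decide (j % 2 = 0)) :
    cnt17 x (2*m) = m := by
  induction m with
  | zero => simp [cnt17]
  | succ m ih =>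
    have e : 2 * (m+1) = 2*m + 1 + 1 := by ring
    rw [e, cnt17_succ, cnt17_succ]
    have hm : cnt17 x (2*m) = m := ih (fun j hj => h j (by omega))
    have ha : ¬ (1 ≤ 2*m ∧ x (2*m-1) = true ∧ x (2*m) = false) := by
      rintro ⟨h1, h2, h3⟩
      have hx := h (2*m-1) (by omega)
      rw [h2] at hx
      have : (2*m-1) % 2 = 0 := by simpa using hx.symm
      omega
    have hb : 1 ≤ 2*m+1 ∧ x (2*m+1-1) = true ∧ x (2*m+1) = false := by
      refine ⟨by omega, ?_, ?_⟩
      · rw [Nat.add_sub_cancel, h (2*m) (by omega)]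
        simp only [decide_eq_true_eq]
        omega
      · rw [h (2*m+1) (by omega)]
        simp only [decide_eq_false_iff_not]
        omega
    rw [if_neg ha, if_pos hb, hm]


lemma oneLine_length {n : ℕ} (σ : Equiv.Perm (Fin n)) : (oneLine σ).length = n := by
  simp [oneLine]

lemma oneLine_getD {n : ℕ} (σ : Equiv.Perm (Fin n)) (i : ℕ) (h : i < n) :
    (oneLine σ).getD i 0 = ((σ ⟨i, h⟩ : ℕ) : ℤ) + 1 := by
  rw [List.getD_eq_getElem _ _ (by simp [oneLine_length, h])]
  simp [oneLine]

lemma range_filter_odd (m : ℕ) : ((Finset.range (2*m)).filter fun i => i % 2 = 1).card = m := by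
  induction m with
  | zero => simp
  | succ m ih =>
    have e : 2 * (m+1) = (2*m + 1) + 1 := by ring
    rw [e, Finset.range_add_one, Finset.filter_insert, Finset.range_add_one, Finset.filter_insert]
    rw [if_pos (by omega : (2*m+1) % 2 = 1), if_neg (by omega : ¬ (2*m) % 2 = 1)]
    rw [Finset.card_insert_of_notMem (by simp), ih]

theorem stmt17 (m : ℕ) (hm : 1 ≤ m) (σ : Equiv.Perm (Fin (2 * m))) :
    (desNum (oneLine σ) = m ∧ xdesNum σ = m) ↔
      ∀ i : Fin (2 * m), ((i : ℕ) < (σ i : ℕ) ↔ (i : ℕ) % 2 = 0) := by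
  set x : ℕ → Bool := fun j => if h : j < 2*m then decide (j < (σ ⟨j, h⟩ : ℕ)) else false with hxdef
  have hxd : ∀ (j : ℕ) (h : j < 2*m), x j = decide (j < (σ ⟨j, h⟩ : ℕ)) := fun j h => dif_pos h
  have hxdes : xdesNum σ = cnt17 x (2*m) := by
    unfold xdesNum xdesW cnt17
    rw [oneLine_length]
    congr 1
    apply List.filter_congr
    intro i hi
    rw [List.mem_range] at hi
    by_cases h1 : 1 ≤ i
    · have hi1 : i - 1 < 2*m := by omega
      simp only [oneLine_getD σ i hi, oneLine_getD σ (i-1) hi1, hxd i hi, hxd (i-1) hi1]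
      simp only [← decide_not, ← Bool.decide_and, decide_eq_decide]
      omega
    · have : i = 0 := by omega
      subst this
      simp
  constructor
  · rintro ⟨-, hxe⟩
    have hmain := cnt17_main m x (by rw [← hxdes]; exact hxe)
    intro i
    have h1 := hmain (i : ℕ) i.isLt
    rw [hxd (i : ℕ) i.isLt] at h1
    simp only [Fin.eta] at h1
    exact decide_eq_decide.mp h1
  · intro hR
    have halt : ∀ j < 2*m, x j = decide (j % 2 = 0) := by
      intro j hj
      rw [hxd j hj]
      exact decide_eq_decide.mpr (hR ⟨j, hj⟩)
    refine ⟨?_, by rw [hxdes]; exact cnt17_alt m x halt⟩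
    have hset : desSet (oneLine σ) = (Finset.range (2*m)).filter fun i => i % 2 = 1 := by
      unfold desSet
      rw [oneLine_length]
      apply Finset.filter_congr
      intro i hi
      rw [Finset.mem_range] at hi
      by_cases h1 : 1 ≤ i
      · have hi1 : i - 1 < 2*m := by omega
        rw [oneLine_getD σ i hi, oneLine_getD σ (i-1) hi1]
        have ha := hR ⟨i, hi⟩
        have hb := hR ⟨i-1, hi1⟩
        simp only [Fin.val_mk] at ha hb
        have hne : ((σ ⟨i, hi⟩ : Fin (2*m)) : ℕ) ≠ ((σ ⟨i-1, hi1⟩ : Fin (2*m)) : ℕ) := by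
          intro hv
          have := σ.injective (Fin.val_injective hv)
          rw [Fin.mk.injEq] at this
          omega
        omega
      · have : i = 0 := by omega
        subst this
        simp
    rw [desNum, hset, range_filter_odd]

end KArr
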